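/- arXiv:2407.06008 — 2 statements merged into one kernel-verified Lean document; each statement's English description precedes it below -/
import Mathlib

section
/- For every matroid M on a finite ground set, Crapo's beta invariant is nonnegative: β(M) ≥ 0. -/
/-!
STATEMENT 5: For every matroid `M` on a finite ground set, Crapo's beta invariant is
nonnegative: `β(M) ≥ 0`, where
`β(M) = (-1)^{r(M)} Σ_{K flat of M} μ(cl(∅), K) · r(K)`,
`μ` being the Möbius function of the lattice of flats of `M` and `r` the rank function.
-/

open Set
open scoped Classical

/-- The rank of a set `X` in a matroid `M`: the largest cardinality of an independent
subset of `X`. -/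
noncomputable def matroidRk {α : Type*} (M : Matroid α) (X : Set α) : ℕ :=
  sSup {n | ∃ I, M.Indep I ∧ I ⊆ X ∧ I.ncard = n}

/-- The rank of the matroid `M` itself. -/
noncomputable def matroidRank {α : Type*} (M : Matroid α) : ℕ :=
  matroidRk M M.E

/-- `mu` is the Möbius function of the lattice of flats of `M`: it satisfies the defining
recursion `Σ_{J flat, K ⊆ J ⊆ L} mu K J = δ_{K,L}` for all flats `K ⊆ L`.  (This property
determines `mu` uniquely on pairs of flats `K ⊆ L`.) -/
def IsMobiusOfFlats {α : Type*} (M : Matroid α) (mu : Set α → Set α → ℤ) : Prop :=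
  ∀ K L : Set α, M.IsFlat K → M.IsFlat L → K ⊆ L →
    (∑ᶠ J ∈ {J : Set α | M.IsFlat J ∧ K ⊆ J ∧ J ⊆ L}, mu K J) = if K = L then 1 else 0

/-- Crapo's beta invariant
`β(M) = (-1)^{r(M)} Σ_{K flat of M} μ(cl(∅), K) · r(K)`. -/
noncomputable def crapoBeta {α : Type*} (M : Matroid α) (mu : Set α → Set α → ℤ) : ℤ :=
  (-1) ^ matroidRank M *
    ∑ᶠ K ∈ {K : Set α | M.IsFlat K}, mu (M.closure ∅) K * (matroidRk M K : ℤ)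

set_option linter.unusedSectionVars false
set_option maxHeartbeats 1000000

section AuxPartB
open Finset in

lemma partB {α : Type*} [DecidableEq α] (E : Finset α) :
    ∀ r : Finset α → ℕ, r ∅ = 0 →
    (∀ A B, A ⊆ B → r A ≤ r B) →
    (∀ A x, r (insert x A) ≤ r A + 1) →
    (∀ A B, r (A ∪ B) + r (A ∩ B) ≤ r A + r B) →
    0 ≤ (-1 : ℤ) ^ (r E) * ∑ A ∈ E.powerset, (-1 : ℤ) ^ A.card * (r A : ℤ) := by
  induction E using Finset.induction_on with
  | empty =>
    intro r h0 _ _ _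
    simp [h0]
  | @insert e s he IH =>
    intro r h0 hmono hunit hsub
    have hsum : ∑ A ∈ (insert e s).powerset, (-1 : ℤ) ^ A.card * (r A : ℤ)
        = ∑ A ∈ s.powerset, (-1 : ℤ) ^ A.card * ((r A : ℤ) - (r (insert e A) : ℤ)) := by
      rw [Finset.sum_powerset_insert he]
      rw [← Finset.sum_add_distrib]
      refine Finset.sum_congr rfl fun A hA => ?_
      have heA : e ∉ A := fun h => he (Finset.mem_powerset.1 hA h)
      rw [Finset.card_insert_of_notMem heA]
      ring
    by_cases h1 : r {e} = 0
    · -- loop case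
      have hins : ∀ A : Finset α, r (insert e A) = r A := by
        intro A
        refine le_antisymm ?_ (hmono _ _ (Finset.subset_insert _ _))
        have := hsub A {e}
        have hu : A ∪ {e} = insert e A := by
          rw [Finset.union_comm]; rfl
        rw [hu, h1] at this
        omega
      rw [hsum]
      have : ∑ A ∈ s.powerset, (-1 : ℤ) ^ A.card * ((r A : ℤ) - (r (insert e A) : ℤ)) = 0 := by
        refine Finset.sum_eq_zero fun A _ => ?_
        rw [hins A]; ring
      rw [this, mul_zero]
    · by_cases h2 : r (insert e s) = r s
      · -- recursive case
        have hse : s.Nonempty := by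
          rcases s.eq_empty_or_nonempty with h | h
          · subst h
            rw [show insert e (∅ : Finset α) = {e} from rfl] at h2
            rw [h0] at h2
            exact absurd h2 h1
          · exact h
        have h1' : r {e} = 1 := by
          have hthis := hunit ∅ e
          rw [h0, show insert e (∅ : Finset α) = {e} from by simp] at hthis
          omega
        have hge1 : ∀ A : Finset α, 1 ≤ r (A ∪ {e}) := by
          intro A
          have := hmono {e} (A ∪ {e}) (Finset.subset_union_right)
          omega
        set r' : Finset α → ℕ := fun A => r (A ∪ {e}) - 1 with hr'
        have hr0' : r' ∅ = 0 := by
          simp only [hr', Finset.empty_union, h1']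
        have hmono' : ∀ A B, A ⊆ B → r' A ≤ r' B := by
          intro A B h
          have := hmono (A ∪ {e}) (B ∪ {e}) (Finset.union_subset_union_left h)
          simp only [hr']
          omega
        have hunit' : ∀ A x, r' (insert x A) ≤ r' A + 1 := by
          intro A x
          have h1 := hunit (A ∪ {e}) x
          have h2 : insert x A ∪ {e} = insert x (A ∪ {e}) := by
            rw [Finset.insert_union]
          have h3 := hge1 A
          simp only [hr', h2]
          omega
        have hsub' : ∀ A B, r' (A ∪ B) + r' (A ∩ B) ≤ r' A + r' B := by
          intro A B
          have h1 := hsub (A ∪ {e}) (B ∪ {e})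
          have h2 : (A ∪ {e}) ∪ (B ∪ {e}) = (A ∪ B) ∪ {e} := by
            ext x; simp [Finset.mem_union, Finset.mem_insert]
          have h3 : (A ∪ {e}) ∩ (B ∪ {e}) = (A ∩ B) ∪ {e} := by
            ext x; simp [Finset.mem_union, Finset.mem_inter]; tauto
          rw [h2, h3] at h1
          have := hge1 (A ∪ B)
          have := hge1 (A ∩ B)
          have := hge1 A
          have := hge1 B
          simp only [hr']
          omega
        have IH1 := IH r h0 hmono hunit hsub
        have IH2 := IH r' hr0' hmono' hunit' hsub'
        have hrs1 : 1 ≤ r s := by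
          have := hmono {e} (insert e s) (by
            intro x hx; rw [Finset.mem_singleton] at hx; subst hx; exact Finset.mem_insert_self _ _)
          omega
        have hr's : r' s = r s - 1 := by
          simp only [hr']
          rw [show s ∪ {e} = insert e s by rw [Finset.union_comm]; rfl, h2]
        have hcast : ∀ A : Finset α, ((r (insert e A) : ℤ)) = (r' A : ℤ) + 1 := by
          intro A
          have h4 := hge1 A
          have h5 : A ∪ {e} = insert e A := by rw [Finset.union_comm]; rfl
          simp only [hr', h5] at *
          omega
        rw [hsum, h2]
        have hsplit : ∑ A ∈ s.powerset, (-1 : ℤ) ^ A.card * ((r A : ℤ) - (r (insert e A) : ℤ))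
            = (∑ A ∈ s.powerset, (-1 : ℤ) ^ A.card * (r A : ℤ))
              - (∑ A ∈ s.powerset, (-1 : ℤ) ^ A.card * (r' A : ℤ))
              - ∑ A ∈ s.powerset, (-1 : ℤ) ^ A.card := by
          rw [← Finset.sum_sub_distrib, ← Finset.sum_sub_distrib]
          refine Finset.sum_congr rfl fun A _ => ?_
          rw [hcast A]; ring
        rw [hsplit, Finset.sum_powerset_neg_one_pow_card,
          if_neg (Finset.nonempty_iff_ne_empty.1 hse), sub_zero]
        have hpow : r s = r' s + 1 := by omega
        have hneg : ((-1 : ℤ) ^ (r s)) = -((-1 : ℤ) ^ (r' s)) := by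
          rw [hpow, pow_succ]; ring
        calc (0 : ℤ) ≤ (-1 : ℤ) ^ (r s) * ∑ A ∈ s.powerset, (-1 : ℤ) ^ A.card * (r A : ℤ)
              + (-1 : ℤ) ^ (r' s) * ∑ A ∈ s.powerset, (-1 : ℤ) ^ A.card * (r' A : ℤ) :=
            add_nonneg IH1 IH2
          _ = _ := by rw [hneg]; ring
      · -- coloop case
        have h2' : r (insert e s) = r s + 1 := by
          have ha := hunit s e
          have hb := hmono s (insert e s) (Finset.subset_insert _ _)
          omega
        have hins : ∀ A ∈ s.powerset, r (insert e A) = r A + 1 := by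
          intro A hA
          rw [Finset.mem_powerset] at hA
          have ha := hsub (insert e A) s
          have hu : insert e A ∪ s = insert e s := by
            ext x
            simp only [Finset.mem_union, Finset.mem_insert]
            constructor
            · rintro ((h | h) | h)
              · exact Or.inl h
              · exact Or.inr (hA h)
              · exact Or.inr h
            · rintro (h | h)
              · exact Or.inl (Or.inl h)
              · exact Or.inr h
          have hi : insert e A ∩ s = A := by
            ext x
            simp only [Finset.mem_inter, Finset.mem_insert]
            constructor
            · rintro ⟨h | h, hs⟩
              · exact absurd (h ▸ hs) he
              · exact h
            · intro h; exact ⟨Or.inr h, hA h⟩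
          rw [hu, hi, h2'] at ha
          have := hunit A e
          omega
        rw [hsum]
        have : ∑ A ∈ s.powerset, (-1 : ℤ) ^ A.card * ((r A : ℤ) - (r (insert e A) : ℤ))
            = - ∑ A ∈ s.powerset, (-1 : ℤ) ^ A.card := by
          rw [← Finset.sum_neg_distrib]
          refine Finset.sum_congr rfl fun A hA => ?_
          rw [hins A hA]
          push_cast
          ring
        rw [this, Finset.sum_powerset_neg_one_pow_card]
        by_cases hs : s = ∅
        · subst hs
          rw [if_pos rfl]
          rw [show insert e (∅ : Finset α) = {e} from rfl] at h2' ⊢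
          rw [h0] at h2'
          rw [h2']
          norm_num
        · rw [if_neg hs]
          simp

end AuxPartB


section Rank
variable {α : Type*} {M : Matroid α} {X Y I J : Set α} {e : α}

lemma flat_closure (M : Matroid α) (X : Set α) : M.IsFlat (M.closure X) := by
  rw [Matroid.closure_def]
  have hne : Nonempty {F // F ∈ {F | M.IsFlat F ∧ X ∩ M.E ⊆ F}} :=
    ⟨⟨M.E, M.ground_isFlat, inter_subset_right⟩⟩
  rw [sInter_eq_iInter]
  exact Matroid.IsFlat.iInter fun F => F.2.1

lemma indep_finite [M.Finite] (hI : M.Indep I) : I.Finite :=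
  M.set_finite I hI.subset_ground

lemma matroidRk_basis' [M.Finite] (hI : M.IsBasis' I X) : matroidRk M X = I.ncard := by
  have hub : ∀ n ∈ {n | ∃ J, M.Indep J ∧ J ⊆ X ∧ J.ncard = n}, n ≤ I.ncard := by
    rintro n ⟨J, hJ, hJX, rfl⟩
    obtain ⟨J', hJ', hJJ'⟩ := hJ.subset_isBasis'_of_subset hJX
    have hcard : J'.ncard = I.ncard := by
      rw [Set.ncard_def, hJ'.encard_eq_encard hI, ← Set.ncard_def]
    exact le_trans (Set.ncard_le_ncard hJJ' (indep_finite hJ'.indep)) hcard.le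
  exact IsGreatest.csSup_eq ⟨⟨I, hI.indep, hI.subset, rfl⟩, hub⟩

lemma ncard_le_matroidRk [M.Finite] (hI : M.Indep I) (hIX : I ⊆ X) :
    I.ncard ≤ matroidRk M X := by
  obtain ⟨J, hJ, hIJ⟩ := hI.subset_isBasis'_of_subset hIX
  rw [matroidRk_basis' hJ]
  exact Set.ncard_le_ncard hIJ (indep_finite hJ.indep)

lemma matroidRk_mono [M.Finite] (h : X ⊆ Y) : matroidRk M X ≤ matroidRk M Y := by
  obtain ⟨I, hI⟩ := M.exists_isBasis' X
  rw [matroidRk_basis' hI]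
  exact ncard_le_matroidRk hI.indep (hI.subset.trans h)

lemma matroidRk_closure [M.Finite] (X : Set α) :
    matroidRk M (M.closure X) = matroidRk M X := by
  obtain ⟨I, hI⟩ := M.exists_isBasis' X
  rw [matroidRk_basis' hI, matroidRk_basis' hI.isBasis_closure_right.isBasis']

lemma matroidRk_empty (M : Matroid α) [M.Finite] : matroidRk M ∅ = 0 := by
  obtain ⟨I, hI⟩ := M.exists_isBasis' (∅ : Set α)
  rw [matroidRk_basis' hI, Set.subset_empty_iff.1 hI.subset, Set.ncard_empty]

lemma matroidRk_insert_le [M.Finite] (X : Set α) (e : α) :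
    matroidRk M (insert e X) ≤ matroidRk M X + 1 := by
  obtain ⟨I, hI⟩ := M.exists_isBasis' X
  obtain ⟨J, hJ, hIJ⟩ := hI.indep.subset_isBasis'_of_subset (hI.subset.trans (subset_insert e X))
  rw [matroidRk_basis' hJ, matroidRk_basis' hI]
  have hJsub : J ⊆ insert e I := by
    intro x hx
    by_contra hxn
    rw [Set.mem_insert_iff] at hxn
    push_neg at hxn
    have hxX : x ∈ X := by
      rcases hJ.subset hx with h | h
      · exact absurd h hxn.1
      · exact h
    exact hI.insert_not_indep ⟨hxX, hxn.2⟩ (hJ.indep.subset (Set.insert_subset hx hIJ))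
  calc J.ncard ≤ (insert e I).ncard :=
        Set.ncard_le_ncard hJsub ((indep_finite hI.indep).insert e)
    _ ≤ I.ncard + 1 := Set.ncard_insert_le _ _

lemma matroidRk_submod [M.Finite] (X Y : Set α) :
    matroidRk M (X ∪ Y) + matroidRk M (X ∩ Y) ≤ matroidRk M X + matroidRk M Y := by
  obtain ⟨I, hI⟩ := M.exists_isBasis' (X ∩ Y)
  obtain ⟨J, hJ, hIJ⟩ := hI.indep.subset_isBasis'_of_subset
    (hI.subset.trans (Set.inter_subset_left.trans Set.subset_union_left))
  rw [matroidRk_basis' hJ, matroidRk_basis' hI]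
  have hfinJ : J.Finite := indep_finite hJ.indep
  have h1 : (J ∩ X).ncard ≤ matroidRk M X :=
    ncard_le_matroidRk (hJ.indep.subset inter_subset_left) inter_subset_right
  have h2 : (J ∩ Y).ncard ≤ matroidRk M Y :=
    ncard_le_matroidRk (hJ.indep.subset inter_subset_left) inter_subset_right
  have hJu : (J ∩ X) ∪ (J ∩ Y) = J := by
    rw [← Set.inter_union_distrib_left]
    exact Set.inter_eq_self_of_subset_left hJ.subset
  have hIsub : I ⊆ (J ∩ X) ∩ (J ∩ Y) := by
    intro x hx
    exact ⟨⟨hIJ hx, (hI.subset hx).1⟩, ⟨hIJ hx, (hI.subset hx).2⟩⟩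
  have hkey := Set.ncard_union_add_ncard_inter (J ∩ X) (J ∩ Y)
    (hfinJ.subset inter_subset_left) (hfinJ.subset inter_subset_left)
  rw [hJu] at hkey
  have hIcard : I.ncard ≤ ((J ∩ X) ∩ (J ∩ Y)).ncard :=
    Set.ncard_le_ncard hIsub (hfinJ.subset (inter_subset_left.trans inter_subset_left))
  omega

end Rank

section PartA

variable {α : Type*} (M : Matroid α) [M.Finite]

/-- The finset of elements of a set `X` that lie in the ground set. -/
noncomputable def pfin (X : Set α) : Finset α :=
  M.ground_finite.toFinset.filter (· ∈ X)

variable {M}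

lemma mem_pfin {a : α} {X : Set α} [M.Finite] : a ∈ pfin M X ↔ a ∈ M.E ∧ a ∈ X := by
  simp [pfin, Set.Finite.mem_toFinset]

lemma pfin_mono [M.Finite] {X Y : Set α} (h : X ⊆ Y) : pfin M X ⊆ pfin M Y := by
  intro a ha
  rw [mem_pfin] at ha ⊢
  exact ⟨ha.1, h ha.2⟩

lemma coe_pfin [M.Finite] {X : Set α} (hX : X ⊆ M.E) : (pfin M X : Set α) = X := by
  ext a
  simp only [Finset.mem_coe, mem_pfin]
  exact ⟨fun h => h.2, fun h => ⟨hX h, h⟩⟩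

lemma pfin_eq_empty_iff [M.Finite] {X : Set α} (hX : X ⊆ M.E) : pfin M X = ∅ ↔ X = ∅ := by
  constructor
  · intro h
    ext a
    simp only [Set.mem_empty_iff_false, iff_false]
    intro ha
    have : a ∈ pfin M X := mem_pfin.2 ⟨hX ha, ha⟩
    rw [h] at this
    exact absurd this (Finset.notMem_empty a)
  · intro h
    subst h
    ext a
    simp [mem_pfin]

lemma coeFinset_subset_ground [M.Finite] {A : Finset α} {X : Set α} (hX : X ⊆ M.E)
    (hA : A ∈ (pfin M X).powerset) : (A : Set α) ⊆ M.E := by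
  intro a ha
  exact (mem_pfin.1 ((Finset.mem_powerset.1 hA) ha)).1

variable (M)

lemma flats_finite [M.Finite] : {K : Set α | M.IsFlat K}.Finite :=
  Set.Finite.subset M.ground_finite.finite_subsets (fun _ hK => hK.subset_ground)

/-- The finset of flats of `M`. -/
noncomputable def flatsF [M.Finite] : Finset (Set α) := (flats_finite M).toFinset

/-- The finset of flats between `cl ∅` and `L`. -/
noncomputable def flatsBtw [M.Finite] (L : Set α) : Finset (Set α) :=
  (flatsF M).filter (fun J => M.closure ∅ ⊆ J ∧ J ⊆ L)

/-- The candidate Möbius values `h K = Σ_{A ⊆ K \ cl ∅, cl A = K} (-1)^{|A|}`. -/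
noncomputable def hfun [M.Finite] (K : Set α) : ℤ :=
  ∑ A ∈ (pfin M (K \ M.closure ∅)).powerset,
    if M.closure (A : Set α) = K then (-1) ^ A.card else 0

variable {M}

lemma mem_flatsF [M.Finite] {K : Set α} : K ∈ flatsF M ↔ M.IsFlat K := by
  simp [flatsF, Set.Finite.mem_toFinset]

lemma mem_flatsBtw [M.Finite] {K L : Set α} :
    K ∈ flatsBtw M L ↔ M.IsFlat K ∧ M.closure ∅ ⊆ K ∧ K ⊆ L := by
  simp [flatsBtw, mem_flatsF, and_assoc]

lemma loops_subset_flat [M.Finite] {K : Set α} (hK : M.IsFlat K) : M.closure ∅ ⊆ K := by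
  have := M.closure_subset_closure (empty_subset K)
  rwa [hK.closure] at this

lemma closure_mem_flatsBtw [M.Finite] {L : Set α} (hL : M.IsFlat L) {A : Finset α}
    (hA : A ∈ (pfin M (L \ M.closure ∅)).powerset) : M.closure (A : Set α) ∈ flatsBtw M L := by
  rw [mem_flatsBtw]
  refine ⟨flat_closure M _, M.closure_subset_closure (empty_subset _), ?_⟩
  have hAL : (A : Set α) ⊆ L := by
    intro a ha
    exact (mem_pfin.1 ((Finset.mem_powerset.1 hA) ha)).2.1
  have := M.closure_subset_closure hAL
  rwa [hL.closure] at this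

/-- Extending the summation range in `hfun`-style sums. -/
lemma sum_ite_closure_ext [M.Finite] {K : Set α} (hK : M.IsFlat K) {W : Set α}
    (hW1 : W ⊆ M.E \ M.closure ∅) (hW2 : K \ M.closure ∅ ⊆ W) (c : Finset α → ℤ) :
    (∑ A ∈ (pfin M (K \ M.closure ∅)).powerset,
        if M.closure (A : Set α) = K then c A else 0)
      = ∑ A ∈ (pfin M W).powerset, if M.closure (A : Set α) = K then c A else 0 := by
  apply Finset.sum_subset (Finset.powerset_mono.2 (pfin_mono hW2))
  intro A hA hnA
  rw [if_neg]
  intro hcl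
  apply hnA
  rw [Finset.mem_powerset]
  intro a ha
  have h1 := mem_pfin.1 ((Finset.mem_powerset.1 hA) ha)
  have haA : a ∈ (A : Set α) := ha
  have hsub : (A : Set α) ⊆ M.closure (A : Set α) :=
    M.subset_closure (A : Set α)
      (fun x hx => (mem_pfin.1 ((Finset.mem_powerset.1 hA) hx)).1)
  have haK : a ∈ K := hcl ▸ hsub haA
  exact mem_pfin.2 ⟨h1.1, haK, ((hW1 h1.2).2 : a ∉ M.closure ∅)⟩

lemma hfun_recursion [M.Finite] {L : Set α} (hL : M.IsFlat L) :
    ∑ J ∈ flatsBtw M L, hfun M J = if M.closure ∅ = L then 1 else 0 := by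
  have hLE : L \ M.closure ∅ ⊆ M.E \ M.closure ∅ :=
    Set.diff_subset_diff_left hL.subset_ground
  have step1 : ∀ J ∈ flatsBtw M L, hfun M J =
      ∑ A ∈ (pfin M (L \ M.closure ∅)).powerset,
        if M.closure (A : Set α) = J then (-1 : ℤ) ^ A.card else 0 := by
    intro J hJ
    rw [mem_flatsBtw] at hJ
    exact sum_ite_closure_ext hJ.1 hLE (Set.diff_subset_diff_left hJ.2.2) _
  rw [Finset.sum_congr rfl step1, Finset.sum_comm]
  have step2 : ∀ A ∈ (pfin M (L \ M.closure ∅)).powerset,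
      (∑ J ∈ flatsBtw M L, if M.closure (A : Set α) = J then (-1 : ℤ) ^ A.card else 0)
        = (-1 : ℤ) ^ A.card := by
    intro A hA
    rw [Finset.sum_ite_eq, if_pos (closure_mem_flatsBtw hL hA)]
  rw [Finset.sum_congr rfl step2, Finset.sum_powerset_neg_one_pow_card]
  by_cases h : M.closure ∅ = L
  · rw [if_pos h, if_pos]
    rw [pfin_eq_empty_iff (Set.diff_subset.trans hL.subset_ground), h, Set.diff_self]
  · rw [if_neg h, if_neg]
    intro hcon
    apply h
    rw [pfin_eq_empty_iff (diff_subset.trans hL.subset_ground)] at hcon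
    have hsub : L ⊆ M.closure ∅ := by
      intro x hx
      by_contra hxn
      have : x ∈ L \ M.closure ∅ := ⟨hx, hxn⟩
      rw [hcon] at this
      exact this
    exact le_antisymm (loops_subset_flat hL) hsub


lemma mu_recursion [M.Finite] {mu : Set α → Set α → ℤ} (hmu : IsMobiusOfFlats M mu)
    {L : Set α} (hL : M.IsFlat L) :
    ∑ J ∈ flatsBtw M L, mu (M.closure ∅) J = if M.closure ∅ = L then 1 else 0 := by
  have hset : {J : Set α | M.IsFlat J ∧ M.closure ∅ ⊆ J ∧ J ⊆ L} = ↑(flatsBtw M L) := by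
    ext J
    simp only [Set.mem_setOf_eq, Finset.mem_coe, mem_flatsBtw]
  have := hmu (M.closure ∅) L (flat_closure M ∅) hL (loops_subset_flat hL)
  rwa [hset, finsum_mem_coe_finset] at this

lemma mu_eq_hfun [M.Finite] {mu : Set α → Set α → ℤ} (hmu : IsMobiusOfFlats M mu)
    {K : Set α} (hK : M.IsFlat K) : mu (M.closure ∅) K = hfun M K := by
  suffices h : ∀ n, ∀ K : Set α, M.IsFlat K → K.ncard < n → mu (M.closure ∅) K = hfun M K from
    h (K.ncard + 1) K hK (Nat.lt_succ_self _)
  intro n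
  induction n with
  | zero => intro K _ h; omega
  | succ n IH =>
    intro K hK hn
    have hrec_mu := mu_recursion hmu hK
    have hrec_h := hfun_recursion hK
    have hKmem : K ∈ flatsBtw M K :=
      mem_flatsBtw.2 ⟨hK, loops_subset_flat hK, subset_rfl⟩
    rw [← Finset.add_sum_erase _ _ hKmem] at hrec_mu hrec_h
    have herase : ∀ J ∈ (flatsBtw M K).erase K, mu (M.closure ∅) J = hfun M J := by
      intro J hJ
      have hJK := Finset.mem_erase.1 hJ
      have hJ' := mem_flatsBtw.1 hJK.2
      apply IH J hJ'.1
      have hss : J ⊂ K := HasSubset.Subset.ssubset_of_ne hJ'.2.2 hJK.1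
      have := Set.ncard_lt_ncard hss (M.set_finite K hK.subset_ground)
      omega
    rw [Finset.sum_congr rfl herase] at hrec_mu
    have heta : ∑ x ∈ (flatsBtw M K).erase K, hfun M x
        = ((flatsBtw M K).erase K).sum (hfun M) := rfl
    rw [heta] at hrec_mu
    omega

lemma flat_sum_eq_subset_sum [M.Finite] :
    (∑ K ∈ flatsF M, hfun M K * (matroidRk M K : ℤ))
      = ∑ A ∈ (pfin M (M.E \ M.closure ∅)).powerset,
          (-1 : ℤ) ^ A.card * (matroidRk M (A : Set α) : ℤ) := by
  have step1 : ∀ K ∈ flatsF M, hfun M K * (matroidRk M K : ℤ)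
      = ∑ A ∈ (pfin M (M.E \ M.closure ∅)).powerset,
          (if M.closure (A : Set α) = K then (-1 : ℤ) ^ A.card * (matroidRk M K : ℤ) else 0) := by
    intro K hK
    rw [mem_flatsF] at hK
    rw [hfun, Finset.sum_mul]
    have : ∀ A ∈ (pfin M (K \ M.closure ∅)).powerset,
        (if M.closure (A : Set α) = K then (-1 : ℤ) ^ A.card else 0) * (matroidRk M K : ℤ)
          = (if M.closure (A : Set α) = K
              then (-1 : ℤ) ^ A.card * (matroidRk M K : ℤ) else 0) := by
      intro A _
      split <;> simp
    rw [Finset.sum_congr rfl this,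
      sum_ite_closure_ext hK (Set.Subset.rfl) (Set.diff_subset_diff_left hK.subset_ground)]
  rw [Finset.sum_congr rfl step1, Finset.sum_comm]
  refine Finset.sum_congr rfl fun A hA => ?_
  have hclmem : M.closure (A : Set α) ∈ flatsF M := mem_flatsF.2 (flat_closure M _)
  rw [Finset.sum_ite_eq, if_pos hclmem, matroidRk_closure]

end PartA


theorem crapoBeta_nonneg {α : Type*} (M : Matroid α) [M.Finite]
    (mu : Set α → Set α → ℤ) (hmu : IsMobiusOfFlats M mu) :
    0 ≤ crapoBeta M mu := by
  classical
  have hset : {K : Set α | M.IsFlat K} = ↑(flatsF M) := by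
    ext K
    simp only [Set.mem_setOf_eq, Finset.mem_coe, mem_flatsF]
  unfold crapoBeta
  rw [hset, finsum_mem_coe_finset]
  have hcongr : ∀ K ∈ flatsF M,
      mu (M.closure ∅) K * (matroidRk M K : ℤ) = hfun M K * (matroidRk M K : ℤ) :=
    fun K hK => by rw [mu_eq_hfun hmu (mem_flatsF.1 hK)]
  rw [Finset.sum_congr rfl hcongr, flat_sum_eq_subset_sum]
  have hrank_eq : matroidRk M ((pfin M (M.E \ M.closure ∅) : Finset α) : Set α)
      = matroidRank M := by
    rw [coe_pfin Set.diff_subset]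
    refine le_antisymm (matroidRk_mono Set.diff_subset) ?_
    have hEsub : M.E ⊆ M.closure (M.E \ M.closure ∅) := by
      intro x hx
      by_cases hxl : x ∈ M.closure ∅
      · exact M.closure_subset_closure (Set.empty_subset _) hxl
      · exact M.subset_closure _ Set.diff_subset ⟨hx, hxl⟩
    calc matroidRank M = matroidRk M M.E := rfl
      _ ≤ matroidRk M (M.closure (M.E \ M.closure ∅)) := matroidRk_mono hEsub
      _ = matroidRk M (M.E \ M.closure ∅) := matroidRk_closure _
  have hB := partB (pfin M (M.E \ M.closure ∅)) (fun A => matroidRk M (A : Set α))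
    (by show matroidRk M ((∅ : Finset α) : Set α) = 0
        rw [Finset.coe_empty]; exact matroidRk_empty M)
    (fun A B h => matroidRk_mono (Finset.coe_subset.2 h))
    (fun A x => by
      show matroidRk M ((insert x A : Finset α) : Set α) ≤ matroidRk M (A : Set α) + 1
      rw [Finset.coe_insert]; exact matroidRk_insert_le _ _)
    (fun A B => by
      show matroidRk M ((A ∪ B : Finset α) : Set α) + matroidRk M ((A ∩ B : Finset α) : Set α)
        ≤ matroidRk M (A : Set α) + matroidRk M (B : Set α)
      rw [Finset.coe_union, Finset.coe_inter]; exact matroidRk_submod _ _)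
  simp only [hrank_eq] at hB
  exact hB
end

section
/- Let M be a matroid on a finite ground set with lattice of flats L(M), bottom flat cl(∅), Möbius function μ of L(M), and rank function r. Then for every flat K of M, the unsigned Möbius value μ⁺(K) = (-1)^{r(K)} μ(cl(∅), K) is strictly positive. -/
/-!
STATEMENT 7: Let `M` be a matroid on a finite ground set with lattice of flats `L(M)`,
bottom flat `cl(∅)`, Möbius function `μ` of `L(M)`, and rank function `r`.  Then for every
flat `K` of `M`, the unsigned Möbius value `μ⁺(K) = (-1)^{r(K)} μ(cl(∅), K)` is strictly
positive.
-/

open Set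
open scoped Classical

namespace MobAux

variable {α : Type*} {M : Matroid α}

lemma flat_closure (M : Matroid α) (X : Set α) : M.IsFlat (M.closure X) := by
  rw [Matroid.closure_def, sInter_eq_iInter]
  have hne : Nonempty {F // F ∈ {F | M.IsFlat F ∧ X ∩ M.E ⊆ F}} :=
    ⟨⟨M.E, M.ground_isFlat, inter_subset_right⟩⟩
  exact Matroid.IsFlat.iInter fun F => F.2.1

lemma bot_subset_flat {K : Set α} (hK : M.IsFlat K) : M.closure ∅ ⊆ K := by
  have := M.closure_subset_closure (empty_subset K)
  rwa [hK.closure] at this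

lemma rk_eq_basis_ncard [M.Finite] {X I : Set α} (hX : X ⊆ M.E) (hI : M.IsBasis I X) :
    matroidRk M X = I.ncard := by
  apply IsGreatest.csSup_eq
  constructor
  · exact ⟨I, hI.indep, hI.subset, rfl⟩
  · rintro n ⟨J, hJ, hJX, rfl⟩
    obtain ⟨J', hJ', hJJ'⟩ := hJ.subset_isBasis_of_subset hJX hX
    have hcard : J'.ncard = I.ncard :=
      (hJ'.isBase_restrict).ncard_eq_ncard_of_isBase (hI.isBase_restrict)
    rw [← hcard]
    exact ncard_le_ncard hJJ' (M.set_finite J' (hJ'.subset.trans hX))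

lemma rk_closure_empty [M.Finite] : matroidRk M (M.closure ∅) = 0 := by
  have h : M.IsBasis ∅ (M.closure ∅) := Matroid.empty_isBasis_iff.2 Subset.rfl
  rw [rk_eq_basis_ncard (M.closure_subset_ground ∅) h, ncard_empty]

lemma rk_step [M.Finite] {H : Set α} {a : α} (hH : M.IsFlat H) (haE : a ∈ M.E) (haH : a ∉ H) :
    matroidRk M (M.closure (insert a H)) = matroidRk M H + 1 := by
  obtain ⟨I, hI⟩ := M.exists_isBasis H hH.subset_ground
  have hclI : M.closure I = H := by rw [hI.closure_eq_closure, hH.closure]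
  have haI : a ∉ I := fun h => haH (hI.subset h)
  have hind : M.Indep (insert a I) :=
    (hI.indep.insert_indep_iff_of_notMem haI).2 ⟨haE, by rwa [hclI]⟩
  have hcl : M.closure (insert a I) = M.closure (insert a H) := by
    rw [← hclI, Matroid.closure_insert_closure_eq_closure_insert]
  have hB : M.IsBasis (insert a I) (M.closure (insert a H)) := by
    rw [← hcl]; exact hind.isBasis_closure
  rw [rk_eq_basis_ncard (M.closure_subset_ground _) hB,
    rk_eq_basis_ncard hH.subset_ground hI,
    ncard_insert_of_notMem haI (M.set_finite I hI.indep.subset_ground)]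

lemma flats_finite (M : Matroid α) [M.Finite] (P : Set α → Prop) :
    {J : Set α | M.IsFlat J ∧ P J}.Finite :=
  (M.ground_finite.finite_subsets).subset fun _ hJ => hJ.1.subset_ground

lemma mob_rec [M.Finite] {mu : Set α → Set α → ℤ} (hmu : IsMobiusOfFlats M mu)
    {L : Set α} (hL : M.IsFlat L) :
    ∑ J ∈ (flats_finite M (fun J => J ⊆ L)).toFinset, mu (M.closure ∅) J
      = if M.closure ∅ = L then 1 else 0 := by
  have h := hmu (M.closure ∅) L (flat_closure M ∅) hL (bot_subset_flat hL)
  have hsets : {J : Set α | M.IsFlat J ∧ M.closure ∅ ⊆ J ∧ J ⊆ L}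
      = {J : Set α | M.IsFlat J ∧ J ⊆ L} := by
    ext J
    exact ⟨fun h => ⟨h.1, h.2.2⟩, fun h => ⟨h.1, bot_subset_flat h.1, h.2⟩⟩
  rw [hsets] at h
  rwa [finsum_mem_eq_finite_toFinset_sum _ (flats_finite M (fun J => J ⊆ L))] at h

lemma weisner [M.Finite] {mu : Set α → Set α → ℤ} (hmu : IsMobiusOfFlats M mu)
    {a : α} (haE : a ∈ M.E) (ha0 : a ∉ M.closure ∅) :
    ∀ n (Z : Set α), M.IsFlat Z → a ∈ Z → Z.ncard = n →
      ∑ H ∈ (flats_finite M (fun H => M.closure (insert a H) = Z)).toFinset,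
        mu (M.closure ∅) H = 0 := by
  intro n
  induction n using Nat.strong_induction_on with
  | _ n IH =>
    intro Z hZ haZ hn
    set F0 := M.closure ∅ with hF0
    set s := (flats_finite M (fun H => H ⊆ Z)).toFinset with hs
    set t := (flats_finite M (fun W => a ∈ W ∧ W ⊆ Z)).toFinset with ht
    have hmaps : ∀ H ∈ s, M.closure (insert a H) ∈ t := by
      intro H hH
      rw [hs, Set.Finite.mem_toFinset] at hH
      rw [ht, Set.Finite.mem_toFinset]
      refine ⟨flat_closure M _, ?_, ?_⟩
      · exact M.subset_closure (insert a H)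
          (insert_subset haE hH.1.subset_ground) (mem_insert a H)
      · have := M.closure_subset_closure (insert_subset haZ hH.2)
        rwa [hZ.closure] at this
    have hfib := Finset.sum_fiberwise_of_maps_to hmaps (fun H => mu F0 H)
    have hrhs : ∑ H ∈ s, mu F0 H = 0 := by
      rw [hs, mob_rec hmu hZ, if_neg]
      intro h
      rw [hF0, h] at ha0
      exact ha0 haZ
    rw [hrhs] at hfib
    have hfibeq : ∀ W ∈ t,
        s.filter (fun H => M.closure (insert a H) = W)
          = (flats_finite M (fun H => M.closure (insert a H) = W)).toFinset := by
      intro W hW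
      rw [ht, Set.Finite.mem_toFinset] at hW
      ext H
      simp only [Finset.mem_filter, hs, Set.Finite.mem_toFinset, mem_setOf_eq]
      constructor
      · rintro ⟨⟨h1, _⟩, h3⟩; exact ⟨h1, h3⟩
      · rintro ⟨h1, h3⟩
        refine ⟨⟨h1, ?_⟩, h3⟩
        have hHW : H ⊆ W := by
          rw [← h3]
          exact (subset_insert a H).trans
            (M.subset_closure (insert a H) (insert_subset haE h1.subset_ground))
        exact hHW.trans hW.2.2
    rw [Finset.sum_congr rfl (fun W hW => by rw [hfibeq W hW])] at hfib
    have hZt : Z ∈ t := by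
      rw [ht, Set.Finite.mem_toFinset]; exact ⟨hZ, haZ, Subset.rfl⟩
    have hsplit := Finset.add_sum_erase t
      (fun W => ∑ H ∈ (flats_finite M (fun H => M.closure (insert a H) = W)).toFinset,
        mu F0 H) hZt
    rw [hfib] at hsplit
    have herase : ∀ W ∈ t.erase Z,
        ∑ H ∈ (flats_finite M (fun H => M.closure (insert a H) = W)).toFinset,
          mu F0 H = 0 := by
      intro W hW
      have hWne := Finset.ne_of_mem_erase hW
      have hWt := Finset.mem_of_mem_erase hW
      rw [ht, Set.Finite.mem_toFinset] at hWt
      have hss : W ⊂ Z := ssubset_of_subset_of_ne hWt.2.2 hWne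
      have hlt : W.ncard < n := by
        rw [← hn]
        exact ncard_lt_ncard hss (M.set_finite Z hZ.subset_ground)
      exact IH W.ncard hlt W hWt.1 hWt.2.1 rfl
    rw [Finset.sum_eq_zero herase, add_zero] at hsplit
    exact hsplit

lemma main_aux [M.Finite] {mu : Set α → Set α → ℤ} (hmu : IsMobiusOfFlats M mu) :
    ∀ n (K : Set α), M.IsFlat K → matroidRk M K = n →
      0 < (-1 : ℤ) ^ n * mu (M.closure ∅) K := by
  intro n
  induction n using Nat.strong_induction_on with
  | _ n IH =>
    intro K hK hrk
    by_cases hKb : K = M.closure ∅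
    · have hset : {J : Set α | M.IsFlat J ∧ K ⊆ J ∧ J ⊆ K} = {K} := by
        ext J
        simp only [mem_setOf_eq, mem_singleton_iff]
        constructor
        · rintro ⟨_, h1, h2⟩; exact subset_antisymm h2 h1
        · rintro rfl; exact ⟨hK, Subset.rfl, Subset.rfl⟩
      have h := hmu K K hK hK Subset.rfl
      rw [hset, finsum_mem_singleton, if_pos rfl] at h
      have hr0 : n = 0 := by rw [← hrk, hKb, rk_closure_empty]
      rw [hr0, pow_zero, one_mul, ← hKb, h]
      norm_num
    · have hbK : M.closure ∅ ⊆ K := bot_subset_flat hK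
      obtain ⟨a, haK, ha0⟩ : ∃ a, a ∈ K ∧ a ∉ M.closure ∅ := by
        by_contra h
        push_neg at h
        exact hKb (subset_antisymm h hbK)
      have haE : a ∈ M.E := hK.subset_ground haK
      set F0 := M.closure ∅ with hF0
      set s := (flats_finite M (fun H => M.closure (insert a H) = K)).toFinset with hs
      have hKs : K ∈ s := by
        rw [hs, Set.Finite.mem_toFinset]
        exact ⟨hK, by rw [insert_eq_self.2 haK, hK.closure]⟩
      have hw := weisner hmu haE ha0 K.ncard K hK haK rfl
      have hsplit := Finset.add_sum_erase s (fun H => mu F0 H) hKs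
      rw [hw] at hsplit
      have hmuK : mu F0 K = - ∑ H ∈ s.erase K, mu F0 H := by linarith
      have hrkH : ∀ H ∈ s.erase K, matroidRk M H + 1 = n := by
        intro H hH
        have hHne := Finset.ne_of_mem_erase hH
        have hHs := Finset.mem_of_mem_erase hH
        rw [hs, Set.Finite.mem_toFinset] at hHs
        have haH : a ∉ H := by
          intro haH
          apply hHne
          rw [← hHs.2, insert_eq_self.2 haH, hHs.1.closure]
        have hstep := rk_step hHs.1 haE haH
        rw [hHs.2, hrk] at hstep
        exact hstep.symm
      have hind : M.Indep {a} := by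
        have h := (M.empty_indep.insert_indep_iff_of_notMem (notMem_empty a)).2 ⟨haE, ha0⟩
        simpa using h
      obtain ⟨B, hB, haB⟩ := hind.subset_isBasis_of_subset
        (singleton_subset_iff.2 haK) hK.subset_ground
      have haB' : a ∈ B := haB rfl
      have hH0K : M.closure (insert a (M.closure (B \ {a}))) = K := by
        rw [Matroid.closure_insert_closure_eq_closure_insert, insert_diff_singleton,
          insert_eq_self.2 haB', hB.closure_eq_closure, hK.closure]
      have haH0 : a ∉ M.closure (B \ {a}) := hB.indep.notMem_closure_diff_of_mem haB'
      have hH0s : M.closure (B \ {a}) ∈ s.erase K := by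
        rw [Finset.mem_erase, hs, Set.Finite.mem_toFinset]
        exact ⟨fun h => haH0 (h ▸ haK), flat_closure M _, hH0K⟩
      obtain ⟨m, rfl⟩ : ∃ m, n = m + 1 :=
        ⟨matroidRk M (M.closure (B \ {a})), (hrkH _ hH0s).symm⟩
      rw [hmuK]
      have hcalc : (-1 : ℤ) ^ (m + 1) * -∑ H ∈ s.erase K, mu F0 H
          = ∑ H ∈ s.erase K, (-1 : ℤ) ^ m * mu F0 H := by
        rw [← Finset.mul_sum]
        ring
      rw [hcalc]
      refine Finset.sum_pos ?_ ⟨_, hH0s⟩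
      intro H hH
      have hHs := Finset.mem_of_mem_erase hH
      rw [hs, Set.Finite.mem_toFinset] at hHs
      have hrH : matroidRk M H = m := by
        have := hrkH H hH
        omega
      exact IH m (Nat.lt_succ_self m) H hHs.1 hrH

end MobAux

theorem unsigned_mobius_pos {α : Type*} (M : Matroid α) [M.Finite]
    (mu : Set α → Set α → ℤ) (hmu : IsMobiusOfFlats M mu)
    (K : Set α) (hK : M.IsFlat K) :
    0 < (-1 : ℤ) ^ matroidRk M K * mu (M.closure ∅) K :=
  MobAux.main_aux hmu (matroidRk M K) K hK rfl
end
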